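/- For every real number s ≠ 0, √(is)·sinh(is)·cosh(√(is)) + cosh(is)·sinh(√(is)) ≠ 0. -/

import Mathlib

lemma wh_key (a S C : ℝ) (ha : 0 < a) (hSC : S ^ 2 + C ^ 2 = 1)
    (h1 : a * S * (-(Real.cosh a * Real.cos a) - Real.sinh a * Real.sin a)
        + C * (Real.sinh a * Real.cos a) = 0)
    (h2 : a * S * (Real.cosh a * Real.cos a - Real.sinh a * Real.sin a)
        + C * (Real.cosh a * Real.sin a) = 0) : False := by
  set ch := Real.cosh a with hch_def
  set sh := Real.sinh a with hsh_def
  set c := Real.cos a with hc_def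
  set si := Real.sin a with hsi_def
  have hch : 1 ≤ ch := Real.one_le_cosh a
  have hsh : 0 < sh := Real.sinh_pos_iff.mpr ha
  have hcs : si ^ 2 + c ^ 2 = 1 := Real.sin_sq_add_cos_sq a
  have hhyp : ch ^ 2 - sh ^ 2 = 1 := Real.cosh_sq_sub_sinh_sq a
  have hpos : 0 < sh * ch + si * c := by
    have h2a : 2 * a < Real.sinh (2 * a) := Real.self_lt_sinh_iff.mpr (by linarith)
    have hs2 : Real.sinh (2 * a) = 2 * sh * ch := Real.sinh_two_mul a
    have hsin2 : Real.sin (2 * a) = 2 * si * c := Real.sin_two_mul a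
    rcases le_or_gt (2 * a) 1 with h | h
    · have hp : (1:ℝ) ≤ Real.pi := by linarith [Real.pi_gt_three]
      have :0 ≤ Real.sin (2 * a) := Real.sin_nonneg_of_nonneg_of_le_pi (by linarith) (by linarith)
      nlinarith
    · have := Real.neg_one_le_sin (2 * a)
      nlinarith
  have hC : C = 0 := by
    have hkey : C * (sh * ch + si * c) = 0 := by
      linear_combination (ch * c - sh * si) * h1 + (ch * c + sh * si) * h2
        - (C * sh * ch) * hcs - (C * si * c) * hhyp
    rcases mul_eq_zero.mp hkey with h | h
    · exact h
    · linarith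
  subst hC
  have hS : S ≠ 0 := by
    intro h
    rw [h] at hSC
    norm_num at hSC
  have haS : a * S ≠ 0 := mul_ne_zero ha.ne' hS
  have hX : a * S * (ch * c) = 0 := by linear_combination (h2 - h1) / 2
  have hY : a * S * (sh * si) = 0 := by linear_combination (-h1 - h2) / 2
  have hc0 : c = 0 := by
    rcases mul_eq_zero.mp ((mul_eq_zero.mp hX).resolve_left haS) with h | h
    · linarith
    · exact h
  have hsi0 : si = 0 := by
    rcases mul_eq_zero.mp ((mul_eq_zero.mp hY).resolve_left haS) with h | h
    · linarith
    · exact h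
  rw [hc0, hsi0] at hcs
  norm_num at hcs

theorem wave_heat_dirichlet_no_spectrum_on_imaginary_axis (s : ℝ) (hs : s ≠ 0) :
    (Complex.I * s) ^ (1/2 : ℂ) * Complex.sinh (Complex.I * s) *
        Complex.cosh ((Complex.I * s) ^ (1/2 : ℂ)) +
      Complex.cosh (Complex.I * s) * Complex.sinh ((Complex.I * s) ^ (1/2 : ℂ)) ≠ 0 := by
  intro h
  set a := Real.sqrt (|s| / 2) with ha_def
  have ha : 0 < a := Real.sqrt_pos.mpr (div_pos (abs_pos.mpr hs) two_pos)
  have habs : ‖Complex.I * s‖ = |s| := by simp [Complex.norm_real]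
  have h12 : (1/2 : ℂ) = (2⁻¹ : ℂ) := by norm_num
  have hwre : ((Complex.I * (s:ℂ)) ^ (2⁻¹ : ℂ)).re = a := by
    rw [Complex.cpow_inv_two_re, habs]
    simp [ha_def]
  have hcoshIs : Complex.cosh (Complex.I * s) = ((Real.cos s : ℝ) : ℂ) := by
    rw [mul_comm, Complex.cosh_mul_I, Complex.ofReal_cos]
  have hsinhIs : Complex.sinh (Complex.I * s) = ((Real.sin s : ℝ) : ℂ) * Complex.I := by
    rw [mul_comm, Complex.sinh_mul_I, Complex.ofReal_sin]
  rcases lt_or_gt_of_ne hs with hneg | hpos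
  · -- s < 0 : w = a - a I
    have hwim : ((Complex.I * (s:ℂ)) ^ (2⁻¹ : ℂ)).im = -a := by
      rw [Complex.cpow_inv_two_im_eq_neg_sqrt (by simpa using hneg), habs]
      simp [ha_def]
    have hw : (Complex.I * (s:ℂ)) ^ (1/2 : ℂ) = (a : ℂ) - (a : ℂ) * Complex.I := by
      rw [h12]; refine Complex.ext ?_ ?_ <;> simp [hwre, hwim]
    have hch : Complex.cosh ((a : ℂ) - (a : ℂ) * Complex.I)
        = ((Real.cosh a * Real.cos a : ℝ) : ℂ) - ((Real.sinh a * Real.sin a : ℝ) : ℂ) * Complex.I := by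
      rw [Complex.cosh_sub, Complex.cosh_mul_I, Complex.sinh_mul_I]; push_cast; ring
    have hsh : Complex.sinh ((a : ℂ) - (a : ℂ) * Complex.I)
        = ((Real.sinh a * Real.cos a : ℝ) : ℂ) - ((Real.cosh a * Real.sin a : ℝ) : ℂ) * Complex.I := by
      rw [Complex.sinh_sub, Complex.cosh_mul_I, Complex.sinh_mul_I]; push_cast; ring
    rw [hw, hch, hsh, hcoshIs, hsinhIs, Complex.ext_iff] at h
    obtain ⟨h1, h2⟩ := h
    simp only [Complex.add_re, Complex.add_im, Complex.mul_re, Complex.mul_im, Complex.sub_re,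
      Complex.sub_im, Complex.I_re, Complex.I_im, Complex.ofReal_re, Complex.ofReal_im,
      Complex.zero_re, Complex.zero_im] at h1 h2
    exact wh_key a (-Real.sin s) (Real.cos s) ha
      (by linear_combination Real.sin_sq_add_cos_sq s)
      (by linear_combination h1) (by linear_combination -h2)
  · -- s > 0 : w = a + a I
    have hwim : ((Complex.I * (s:ℂ)) ^ (2⁻¹ : ℂ)).im = a := by
      rw [Complex.cpow_inv_two_im_eq_sqrt (by simp; positivity), habs]
      simp [ha_def]
    have hw : (Complex.I * (s:ℂ)) ^ (1/2 : ℂ) = (a : ℂ) + (a : ℂ) * Complex.I := by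
      rw [h12]; refine Complex.ext ?_ ?_ <;> simp [hwre, hwim]
    have hch : Complex.cosh ((a : ℂ) + (a : ℂ) * Complex.I)
        = ((Real.cosh a * Real.cos a : ℝ) : ℂ) + ((Real.sinh a * Real.sin a : ℝ) : ℂ) * Complex.I := by
      rw [Complex.cosh_add, Complex.cosh_mul_I, Complex.sinh_mul_I]; push_cast; ring
    have hsh : Complex.sinh ((a : ℂ) + (a : ℂ) * Complex.I)
        = ((Real.sinh a * Real.cos a : ℝ) : ℂ) + ((Real.cosh a * Real.sin a : ℝ) : ℂ) * Complex.I := by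
      rw [Complex.sinh_add, Complex.cosh_mul_I, Complex.sinh_mul_I]; push_cast; ring
    rw [hw, hch, hsh, hcoshIs, hsinhIs, Complex.ext_iff] at h
    obtain ⟨h1, h2⟩ := h
    simp only [Complex.add_re, Complex.add_im, Complex.mul_re, Complex.mul_im,
      Complex.I_re, Complex.I_im, Complex.ofReal_re, Complex.ofReal_im,
      Complex.zero_re, Complex.zero_im] at h1 h2
    exact wh_key a (Real.sin s) (Real.cos s) ha (Real.sin_sq_add_cos_sq s)
      (by linear_combination h1) (by linear_combination h2)
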